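/- Let 𝔩 be an elliptic polynomial of degree d on ℚ_p^N, α > 0 and m > 0. If αd > N, then the function ξ ↦ 1/(|𝔩(ξ)|_p^α + m²) is integrable on ℚ_p^N with respect to Haar measure. -/

import Mathlib

open MeasureTheory
open scoped ENNReal

set_option maxHeartbeats 1000000
open MvPolynomial

noncomputable section

lemma aux_eval_smul {R : Type*} [CommRing R] {N d : ℕ} {l : MvPolynomial (Fin N) R}
    (hhom : l.IsHomogeneous d) (c : R) (ξ : Fin N → R) :
    eval (c • ξ) l = c ^ d * eval ξ l := by
  rw [eval_eq', eval_eq', Finset.mul_sum]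
  refine Finset.sum_congr rfl fun s hs => ?_
  have hdeg : ∑ i, s i = d := by
    have h := hhom (mem_support_iff.mp hs)
    rw [← h, Finsupp.weight_apply, Finsupp.sum_fintype]
    · simp [mul_comm]
    · intro i; simp
  have : ∏ i, (c • ξ) i ^ s i = c ^ d * ∏ i, ξ i ^ s i := by
    simp only [Pi.smul_apply, smul_eq_mul, mul_pow, Finset.prod_mul_distrib,
      Finset.prod_pow_eq_pow_sum, hdeg]
  rw [this]; ring

lemma aux_lower_bound {p N : ℕ} [Fact p.Prime] (hN : 1 ≤ N)
    {d : ℕ} (hd : 0 < d) {l : MvPolynomial (Fin N) ℚ_[p]}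
    (hhom : l.IsHomogeneous d)
    (hell : ∀ ξ : Fin N → ℚ_[p], eval ξ l = 0 ↔ ξ = 0) :
    ∃ C : ℝ, 0 < C ∧ ∀ ξ : Fin N → ℚ_[p], C * ‖ξ‖ ^ d ≤ ‖eval ξ l‖ := by
  have : Nonempty (Fin N) := ⟨⟨0, hN⟩⟩
  -- the unit sphere
  set S : Set (Fin N → ℚ_[p]) := Metric.sphere 0 1 with hS
  have hScomp : IsCompact S := isCompact_sphere 0 1
  have hSne : S.Nonempty := by
    refine ⟨fun _ => 1, ?_⟩
    have : ‖(fun _ : Fin N => (1:ℚ_[p]))‖ = 1 := by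
      rw [pi_norm_const]; simp
    simp [hS, Metric.mem_sphere, dist_eq_norm, this]
  have hcont : ContinuousOn (fun ξ : Fin N → ℚ_[p] => ‖eval ξ l‖) S :=
    ((continuous_eval l).norm).continuousOn
  obtain ⟨ξ₀, hξ₀S, hmin⟩ := hScomp.exists_isMinOn hSne hcont
  have hξ₀norm : ‖ξ₀‖ = 1 := by simpa [hS, dist_eq_norm] using hξ₀S
  have hξ₀ne : ξ₀ ≠ 0 := by intro h; rw [h] at hξ₀norm; simp at hξ₀norm
  refine ⟨‖eval ξ₀ l‖, ?_, ?_⟩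
  · have : eval ξ₀ l ≠ 0 := fun h => hξ₀ne ((hell ξ₀).mp h)
    simpa using this
  · intro ξ
    rcases eq_or_ne ξ 0 with rfl | hξ
    · have : eval (0 : Fin N → ℚ_[p]) l = 0 := (hell 0).mpr rfl
      simp [this, zero_pow hd.ne']
    -- the sup norm is attained
    obtain ⟨i, -, hi⟩ := Finset.exists_mem_eq_sup Finset.univ Finset.univ_nonempty
        (fun i => ‖ξ i‖₊)
    have hnorm_eq : ‖ξ‖ = ‖ξ i‖ := by
      have h2 : ‖ξ‖₊ = ‖ξ i‖₊ := (Pi.nnnorm_def ξ).trans hi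
      exact congrArg NNReal.toReal h2
    have hci : ξ i ≠ 0 := by
      intro h
      apply hξ
      have h0 : ‖ξ‖ = 0 := by rw [hnorm_eq, h, norm_zero]
      exact norm_eq_zero.mp h0
    set c : ℚ_[p] := ξ i with hc
    set η : Fin N → ℚ_[p] := c⁻¹ • ξ with hη
    have hηnorm : ‖η‖ = 1 := by
      rw [hη, norm_smul, norm_inv, hnorm_eq]
      rw [inv_mul_cancel₀ (norm_ne_zero_iff.mpr hci)]
    have hηS : η ∈ S := by simp [hS, dist_eq_norm, hηnorm]
    have hev : eval ξ l = c ^ d * eval η l := by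
      have : (c • η) = ξ := by
        rw [hη, smul_smul, mul_inv_cancel₀ hci, one_smul]
      rw [← this, aux_eval_smul hhom]
    have : ‖eval ξ l‖ = ‖ξ‖ ^ d * ‖eval η l‖ := by
      rw [hev, norm_mul, norm_pow, hnorm_eq]
    rw [this, mul_comm (‖eval ξ₀ l‖)]
    exact mul_le_mul_of_nonneg_left (hmin hηS) (pow_nonneg (norm_nonneg _) d)

lemma aux_measure_ball {p N : ℕ} [Fact p.Prime]
    [MeasurableSpace (Fin N → ℚ_[p])] [BorelSpace (Fin N → ℚ_[p])]
    (μ : Measure (Fin N → ℚ_[p])) [μ.IsAddHaarMeasure]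
    (hμ : μ {y : Fin N → ℚ_[p] | ‖y‖ ≤ 1} = 1) (j : ℕ) :
    μ {ξ : Fin N → ℚ_[p] | ‖ξ‖ ≤ (p:ℝ)^j} ≤ (p:ℝ≥0∞)^(j*N) := by
  have hp := (Fact.out : p.Prime)
  have hp0 : (0:ℝ) < p := by exact_mod_cast hp.pos
  set t : (Fin N → Fin (p^j)) → (Fin N → ℚ_[p]) :=
    fun a i => ((a i : ℕ) : ℚ_[p]) * (p:ℚ_[p])^(-(j:ℤ)) with ht
  have hsub : {ξ : Fin N → ℚ_[p] | ‖ξ‖ ≤ (p:ℝ)^j} ⊆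
      ⋃ a, (fun x => x + (- t a)) ⁻¹' {y : Fin N → ℚ_[p] | ‖y‖ ≤ 1} := by
    intro ξ hξ
    have hcomp : ∀ i, ‖ξ i‖ ≤ (p:ℝ)^j :=
      (pi_norm_le_iff_of_nonneg (by positivity)).mp hξ
    have hynorm : ∀ i, ‖(p:ℚ_[p])^(j:ℤ) * ξ i‖ ≤ 1 := by
      intro i
      rw [norm_mul, Padic.norm_p_zpow]
      calc (p:ℝ)^(-(j:ℤ)) * ‖ξ i‖ ≤ (p:ℝ)^(-(j:ℤ)) * (p:ℝ)^(j:ℤ) := by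
            apply mul_le_mul_of_nonneg_left _ (by positivity)
            rw [zpow_natCast]; exact hcomp i
        _ = 1 := by rw [← zpow_add₀ (ne_of_gt hp0)]; simp
    set y : Fin N → ℤ_[p] := fun i => ⟨(p:ℚ_[p])^(j:ℤ) * ξ i, hynorm i⟩ with hy
    set a : Fin N → Fin (p^j) := fun i => ⟨(y i).appr j, PadicInt.appr_lt _ _⟩ with ha
    refine Set.mem_iUnion.mpr ⟨a, ?_⟩
    simp only [Set.mem_preimage, Set.mem_setOf_eq]
    rw [pi_norm_le_iff_of_nonneg (by norm_num)]
    intro i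
    have key : ‖(y i : ℚ_[p]) - ((y i).appr j : ℚ_[p])‖ ≤ (p:ℝ)^(-(j:ℤ)) := by
      have h1 : ‖(y i) - ((y i).appr j : ℤ_[p])‖ ≤ (p:ℝ)^(-(j:ℤ)) :=
        ((y i - ((y i).appr j : ℤ_[p])).norm_le_pow_iff_mem_span_pow j).mpr
          (PadicInt.appr_spec j (y i))
      rw [← PadicInt.padic_norm_e_of_padicInt] at h1
      push_cast at h1 ⊢
      exact h1
    have hrw : ξ i + (- t a i) = (p:ℚ_[p])^(-(j:ℤ)) *
        ((y i : ℚ_[p]) - ((y i).appr j : ℚ_[p])) := by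
      have hpj : (p:ℚ_[p])^(-(j:ℤ)) * (p:ℚ_[p])^(j:ℤ) = 1 := by
        rw [← zpow_add₀ (by exact_mod_cast hp.ne_zero : (p:ℚ_[p]) ≠ 0)]; simp
      have hyval : (y i : ℚ_[p]) = (p:ℚ_[p])^(j:ℤ) * ξ i := rfl
      rw [hyval, ht, ha, mul_sub, ← mul_assoc, hpj, one_mul]
      push_cast
      ring
    have hle : ‖(ξ + (- t a)) i‖ ≤ (p:ℝ)^(j:ℤ) * (p:ℝ)^(-(j:ℤ)) := by
      show ‖ξ i + (- t a) i‖ ≤ _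
      rw [Pi.neg_apply, hrw, norm_mul, Padic.norm_p_zpow, neg_neg]
      exact mul_le_mul_of_nonneg_left key (by positivity)
    refine hle.trans ?_
    rw [← zpow_add₀ (ne_of_gt hp0)]
    simp
  calc μ {ξ : Fin N → ℚ_[p] | ‖ξ‖ ≤ (p:ℝ)^j} ≤
      μ (⋃ a, (fun x => x + (- t a)) ⁻¹' {y : Fin N → ℚ_[p] | ‖y‖ ≤ 1}) :=
        measure_mono hsub
    _ ≤ ∑' a, μ ((fun x => x + (- t a)) ⁻¹' {y : Fin N → ℚ_[p] | ‖y‖ ≤ 1}) :=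
        measure_iUnion_le _
    _ = ∑' _ : (Fin N → Fin (p^j)), (1:ℝ≥0∞) := by
        congr 1; funext a
        rw [measure_preimage_add_right, hμ]
    _ = ((p^j)^N : ℕ) := by
        rw [tsum_fintype]
        simp [Finset.card_univ]
    _ = (p:ℝ≥0∞)^(j*N) := by
        push_cast
        rw [← pow_mul]



/-- for an elliptic polynomial `𝔩` of degree `d` on `ℚ_p^N`, `α > 0`, `m > 0`
with `αd > N`, the function `ξ ↦ 1/(|𝔩(ξ)|_p^α + m²)` is integrable with respect to Haar
measure (normalized so that the unit ball has measure 1). -/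
theorem stmt6 {p N : ℕ} [Fact p.Prime] (hN : 1 ≤ N)
    [MeasurableSpace (Fin N → ℚ_[p])] [BorelSpace (Fin N → ℚ_[p])]
    (μ : Measure (Fin N → ℚ_[p])) [μ.IsAddHaarMeasure]
    (hμ : μ {y : Fin N → ℚ_[p] | ‖y‖ ≤ 1} = 1)
    (d : ℕ) (hd : 0 < d)
    (l : MvPolynomial (Fin N) ℚ_[p])
    (hcoeff : ∀ m, ‖MvPolynomial.coeff m l‖ ≤ 1)
    (hhom : l.IsHomogeneous d)
    (hell : ∀ ξ : Fin N → ℚ_[p], MvPolynomial.eval ξ l = 0 ↔ ξ = 0)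
    (α : ℝ) (hα : 0 < α) (m : ℝ) (hm : 0 < m)
    (hαd : (N : ℝ) < α * d) :
    Integrable (fun ξ : Fin N → ℚ_[p] =>
      (‖MvPolynomial.eval ξ l‖ ^ α + m ^ 2)⁻¹) μ := by
  have hp := (Fact.out : p.Prime)
  have hp1 : (1:ℝ) < p := by exact_mod_cast hp.one_lt
  have hp0 : (0:ℝ) < p := by linarith
  obtain ⟨C, hC, hCb⟩ := aux_lower_bound hN hd hhom hell
  set f : (Fin N → ℚ_[p]) → ℝ := fun ξ => (‖MvPolynomial.eval ξ l‖ ^ α + m ^ 2)⁻¹ with hf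
  have hden_pos : ∀ ξ, 0 < ‖MvPolynomial.eval ξ l‖ ^ α + m ^ 2 := fun ξ =>
    add_pos_of_nonneg_of_pos (Real.rpow_nonneg (norm_nonneg _) α) (by positivity)
  have hf_nonneg : ∀ ξ, 0 ≤ f ξ := fun ξ => inv_nonneg.mpr (hden_pos ξ).le
  have hcont : Continuous f := by
    apply Continuous.inv₀
    · exact (((MvPolynomial.continuous_eval l).norm).rpow_const
        (fun x => Or.inr hα.le)).add continuous_const
    · exact fun ξ => (hden_pos ξ).ne'
  refine ⟨hcont.aestronglyMeasurable, ?_⟩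
  rw [hasFiniteIntegral_iff_ofReal (Filter.Eventually.of_forall hf_nonneg)]
  set B : ℕ → Set (Fin N → ℚ_[p]) := fun j => {ξ | ‖ξ‖ ≤ (p:ℝ)^j} with hB
  set S : ℕ → Set (Fin N → ℚ_[p]) := fun j =>
    match j with
    | 0 => B 0
    | Nat.succ k => B (k+1) \ B k
    with hS
  have hSsubB : ∀ j, S j ⊆ B j := by
    intro j
    cases j with
    | zero => exact le_refl _
    | succ k => exact Set.diff_subset
  have huniv : (⋃ j, S j) = Set.univ := by
    refine Set.eq_univ_of_forall fun ξ => ?_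
    have hex : ∃ j, ξ ∈ B j := by
      obtain ⟨n, hn⟩ := exists_nat_ge ‖ξ‖
      refine ⟨n, ?_⟩
      simp only [hB, Set.mem_setOf_eq]
      refine hn.trans ?_
      calc (n:ℝ) ≤ (2:ℝ)^n := by exact_mod_cast (Nat.lt_two_pow_self (n := n)).le
        _ ≤ (p:ℝ)^n := pow_le_pow_left₀ (by norm_num) (by exact_mod_cast hp.two_le) n
    have hkB : ξ ∈ B (Nat.find hex) := Nat.find_spec hex
    refine Set.mem_iUnion.mpr ⟨Nat.find hex, ?_⟩
    cases hk0 : Nat.find hex with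
    | zero => rw [hk0] at hkB; exact hkB
    | succ k' =>
      have h1 : ξ ∈ B (k'+1) := hk0 ▸ hkB
      have h2 : ξ ∉ B k' := Nat.find_min hex (by omega)
      exact ⟨h1, h2⟩
  -- pointwise bounds on each shell
  set rb : ℕ → ℝ := fun j =>
    match j with
    | 0 => (m^2)⁻¹
    | Nat.succ k => ((C * (p:ℝ)^(k*d))^α)⁻¹
    with hrb
  have hrb_nonneg : ∀ j, 0 ≤ rb j := by
    intro j
    cases j with
    | zero => positivity
    | succ k =>
      have : (0:ℝ) < (C * (p:ℝ)^(k*d))^α := Real.rpow_pos_of_pos (by positivity) α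
      positivity
  have hbound : ∀ j, ∀ ξ ∈ S j, f ξ ≤ rb j := by
    intro j ξ hξ
    cases j with
    | zero =>
      refine inv_anti₀ (by positivity) ?_
      exact le_add_of_nonneg_left (Real.rpow_nonneg (norm_nonneg _) α)
    | succ k =>
      obtain ⟨h1, h2⟩ := hξ
      have hle : (p:ℝ)^k ≤ ‖ξ‖ := le_of_lt (lt_of_not_ge h2)
      have h3 : C * ((p:ℝ)^(k*d)) ≤ ‖MvPolynomial.eval ξ l‖ := by
        calc C * (p:ℝ)^(k*d) = C * ((p:ℝ)^k)^d := by rw [← pow_mul]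
          _ ≤ C * ‖ξ‖^d := by
            apply mul_le_mul_of_nonneg_left _ hC.le
            exact pow_le_pow_left₀ (by positivity) hle d
          _ ≤ ‖MvPolynomial.eval ξ l‖ := hCb ξ
      have h4 : (C * (p:ℝ)^(k*d))^α ≤ ‖MvPolynomial.eval ξ l‖^α :=
        Real.rpow_le_rpow (by positivity) h3 hα.le
      refine inv_anti₀ (Real.rpow_pos_of_pos (by positivity) α) ?_
      exact h4.trans (le_add_of_nonneg_right (by positivity))
  -- the big computation
  set r : ℝ≥0∞ := ENNReal.ofReal ((p:ℝ)^((N:ℝ) - α*d)) with hr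
  have hrlt1 : r < 1 := by
    rw [hr, ← ENNReal.ofReal_one]
    exact ENNReal.ofReal_lt_ofReal_iff_of_nonneg (by positivity) |>.mpr
      (Real.rpow_lt_one_of_one_lt_of_neg hp1 (by linarith))
  have hkey : ∀ k:ℕ, rb (k+1) * (p:ℝ)^((k+1)*N)
      = (C^α)⁻¹ * ((p:ℝ)^N * ((p:ℝ)^((N:ℝ)-α*d))^k) := by
    intro k
    show ((C * (p:ℝ)^(k*d))^α)⁻¹ * (p:ℝ)^((k+1)*N) = _
    rw [Real.mul_rpow hC.le (by positivity)]
    rw [← Real.rpow_natCast (p:ℝ) (k*d), ← Real.rpow_natCast (p:ℝ) ((k+1)*N),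
      ← Real.rpow_natCast (p:ℝ) N, ← Real.rpow_natCast ((p:ℝ)^((N:ℝ)-α*d)) k,
      ← Real.rpow_mul hp0.le, ← Real.rpow_mul hp0.le]
    rw [mul_inv, mul_assoc, ← Real.rpow_neg hp0.le, ← Real.rpow_add hp0,
      ← Real.rpow_add hp0]
    congr 1
    push_cast
    ring
  calc ∫⁻ ξ, ENNReal.ofReal (f ξ) ∂μ
      = ∫⁻ ξ in ⋃ j, S j, ENNReal.ofReal (f ξ) ∂μ := by
        rw [huniv, Measure.restrict_univ]
    _ ≤ ∑' j, ∫⁻ ξ in S j, ENNReal.ofReal (f ξ) ∂μ := lintegral_iUnion_le _ _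
    _ ≤ ∑' j, ENNReal.ofReal (rb j) * (p:ℝ≥0∞)^(j*N) := by
        refine ENNReal.tsum_le_tsum fun j => ?_
        calc ∫⁻ ξ in S j, ENNReal.ofReal (f ξ) ∂μ
            ≤ ∫⁻ _ in S j, ENNReal.ofReal (rb j) ∂μ :=
              setLIntegral_mono measurable_const
                (fun ξ hξ => ENNReal.ofReal_le_ofReal (hbound j ξ hξ))
          _ = ENNReal.ofReal (rb j) * μ (S j) := setLIntegral_const _ _
          _ ≤ ENNReal.ofReal (rb j) * (p:ℝ≥0∞)^(j*N) := by
              apply mul_le_mul_right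
              exact (measure_mono (hSsubB j)).trans (aux_measure_ball μ hμ j)
    _ = ENNReal.ofReal (rb 0) * (p:ℝ≥0∞)^(0*N)
        + ∑' k, ENNReal.ofReal (rb (k+1)) * (p:ℝ≥0∞)^((k+1)*N) :=
        tsum_eq_zero_add' ENNReal.summable
    _ < ⊤ := by
        apply ENNReal.add_lt_top.mpr
        constructor
        · exact ENNReal.mul_lt_top ENNReal.ofReal_lt_top
            (by simp)
        · have heq : ∀ k:ℕ, ENNReal.ofReal (rb (k+1)) * (p:ℝ≥0∞)^((k+1)*N)
              = ENNReal.ofReal ((C^α)⁻¹ * (p:ℝ)^N) * r^k := by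
            intro k
            rw [show ((p:ℝ≥0∞)) = ENNReal.ofReal ((p:ℝ)) from (ENNReal.ofReal_natCast p).symm,
              ← ENNReal.ofReal_pow hp0.le, ← ENNReal.ofReal_mul (hrb_nonneg (k+1)),
              hkey k, hr, ← ENNReal.ofReal_pow (by positivity),
              ← ENNReal.ofReal_mul (by positivity)]
            congr 1
            ring
          simp_rw [heq]
          rw [ENNReal.tsum_mul_left, ENNReal.tsum_geometric]
          apply ENNReal.mul_lt_top ENNReal.ofReal_lt_top
          exact ENNReal.inv_lt_top.mpr (tsub_pos_of_lt hrlt1)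

end
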